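/- Let β = (E, #, ↦, l) be a Bundle Event Structure and C a configuration of β. Define e ≺_C e' iff there exists X ⊆ E with e ∈ X and X ↦ e', and let ⪯_C be the reflexive-transitive closure of ≺_C restricted to C. Then ⪯_C is a partial order on C (in particular it is antisymmetric). -/

import Mathlib

/-- Enabled events of a Bundle Event Structure after the sequence `σ`. -/
def ben {E : Type*} (conf : E → E → Prop) (bund : Set E → E → Prop) (σ : List E) : Set E :=
  {e | e ∉ σ ∧ (∀ X, bund X e → ∃ x ∈ X, x ∈ σ) ∧ ¬ ∃ e' ∈ σ, conf e e'}

/-- `σ` is a trace w.r.t. the enabling function `en`. -/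
def IsTrace {E : Type*} (en : List E → Set E) (σ : List E) : Prop :=
  ∀ i : Fin σ.length, σ.get i ∈ en (σ.take i)

/-- The priority condition on a sequence `σ`. -/
def PrioOK {E : Type*} (en : List E → Set E) (prio : E → E → Prop) (σ : List E) : Prop :=
  ∀ i, i < σ.length → ∀ j h : Fin σ.length,
    σ.get j ≠ σ.get h → σ.get j ∈ en (σ.take i) → σ.get h ∈ en (σ.take i) →
    prio (σ.get h) (σ.get j) → (j : ℕ) < h

/-- Precedence relation of a BES on a configuration `C`:
`e` precedes `e'` if `e` belongs to a bundle set enabling `e'` (restricted to `C`). -/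
def precC {E : Type*} (bund : Set E → E → Prop) (C : Set E) (a b : E) : Prop :=
  a ∈ C ∧ b ∈ C ∧ ∃ X, a ∈ X ∧ bund X b

/-- Reflexive-transitive closure of precedence on `C`. -/
def preC {E : Type*} (bund : Set E → E → Prop) (C : Set E) : E → E → Prop :=
  Relation.ReflTransGen (precC bund C)

/-- the reflexive-transitive closure of the precedence relation on a
configuration of a BES is a partial order on that configuration. -/
theorem bes_precedence_partial_order {E : Type*} (conf : E → E → Prop)
    (bund : Set E → E → Prop)
    (hirr : ∀ e, ¬ conf e e) (hsym : ∀ e e', conf e e' → conf e' e)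
    (hstab : ∀ X e, bund X e → ∀ e1 ∈ X, ∀ e2 ∈ X, e1 ≠ e2 → conf e1 e2)
    (C : Set E) (hC : ∃ σ : List E, IsTrace (ben conf bund) σ ∧ {e | e ∈ σ} = C) :
    (∀ e ∈ C, preC bund C e e) ∧
    (∀ e1 e2 e3, preC bund C e1 e2 → preC bund C e2 e3 → preC bund C e1 e3) ∧
    (∀ e ∈ C, ∀ e' ∈ C, preC bund C e e' → preC bund C e' e → e = e') := by
  classical
  obtain ⟨σ, htr, hCσ⟩ := hC
  -- no two events in σ are in conflict
  have hnoconf : ∀ a ∈ σ, ∀ b ∈ σ, ¬ conf a b := by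
    -- first: if i < j then ¬ conf (σ.get j) (σ.get i)
    have key : ∀ i j : Fin σ.length, (i : ℕ) < (j : ℕ) → ¬ conf (σ.get j) (σ.get i) := by
      intro i j hij hc
      have := (htr j).2.2
      exact this ⟨σ.get i, by
        have : σ.get i ∈ σ.take j := by
          rw [List.mem_take_iff_getElem]
          exact ⟨i, by omega, by simp [List.get_eq_getElem]⟩
        exact this, hc⟩
    intro a ha b hb hc
    set i : Fin σ.length := ⟨σ.idxOf a, List.idxOf_lt_length_iff.2 ha⟩
    set j : Fin σ.length := ⟨σ.idxOf b, List.idxOf_lt_length_iff.2 hb⟩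
    have hga : σ.get i = a := List.idxOf_get _
    have hgb : σ.get j = b := List.idxOf_get _
    rcases lt_trichotomy (i : ℕ) (j : ℕ) with h | h | h
    · exact key i j h (by rw [hga, hgb]; exact hsym _ _ hc)
    · have : a = b := by
        have := List.idxOf_inj ha |>.1 h
        exact this
      exact hirr a (this ▸ hc)
    · exact key j i h (by rw [hga, hgb]; exact hc)
  -- precC implies strictly smaller index
  have hmono : ∀ a b, precC bund C a b → σ.idxOf a < σ.idxOf b := by
    rintro a b ⟨haC, hbC, X, haX, hXb⟩
    have ha : a ∈ σ := by rw [← hCσ] at haC; exact haC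
    have hb : b ∈ σ := by rw [← hCσ] at hbC; exact hbC
    set j : Fin σ.length := ⟨σ.idxOf b, List.idxOf_lt_length_iff.2 hb⟩
    have hgb : σ.get j = b := List.idxOf_get _
    have henb := htr j
    rw [hgb] at henb
    obtain ⟨x, hxX, hxtake⟩ := henb.2.1 X hXb
    have hxσ : x ∈ σ := List.mem_of_mem_take hxtake
    have hxa : x = a := by
      by_contra hne
      exact hnoconf x hxσ a ha (hstab X b hXb x hxX a haX hne)
    subst hxa
    -- x = a ∈ take (idxOf b), so idxOf a < idxOf b
    have : σ.idxOf x < (σ.take j).length := by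
      calc σ.idxOf x = (σ.take j ++ σ.drop j).idxOf x := by rw [List.take_append_drop]
        _ = (σ.take j).idxOf x := List.idxOf_append_of_mem hxtake
        _ < (σ.take j).length := List.idxOf_lt_length_iff.2 hxtake
    simpa using this.trans_le (by simp [List.length_take, j])
  have hmonoT : ∀ a b, Relation.TransGen (precC bund C) a b → σ.idxOf a < σ.idxOf b := by
    intro a b h
    induction h with
    | single h => exact hmono _ _ h
    | tail _ h ih => exact ih.trans (hmono _ _ h)
  refine ⟨fun e _ => Relation.ReflTransGen.refl,
    fun e1 e2 e3 h12 h23 => h12.trans h23, ?_⟩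
  intro e _ e' _ h1 h2
  rcases Relation.reflTransGen_iff_eq_or_transGen.1 h1 with h | h
  · exact h.symm
  rcases Relation.reflTransGen_iff_eq_or_transGen.1 h2 with h' | h'
  · exact h'
  exact absurd (hmonoT _ _ h) (by have := hmonoT _ _ h'; omega)
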